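/- Let a_0 ≥ 2 be an integer, let φ be the unique real root greater than 1 of M(x) = x^{a_0} - x^{a_0-1} - ⋯ - x - 1, and fix η ≥ 1 and ε > 0, with ε small enough that M has no other root in the closed ball of radius ε around φ and φ - 1 - ε > 0. Define, for a_1 > a_0 and a_2 = a_1 + η, P_{a_1}(z) = z^{a_1+a_2}(z-1)M(z) + z^{a_1+1}R(z) + S(z) with R(z) = z^{η+a_0-1} - z^{η} + z^{a_0-1} - 1 and S(z) = -z^{a_0+1} + 2z - 1. Then for all sufficiently large a_1, the polynomial P_{a_1} has a root in the open ball of radius ε around φ. -/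

import Mathlib

open Finset

set_option maxHeartbeats 1000000 in
theorem stmt_11 (a0 η : ℕ) (h0 : 2 ≤ a0) (hη : 1 ≤ η)
    (φ : ℝ) (hφ1 : 1 < φ) (hφroot : φ ^ a0 - ∑ i ∈ range a0, φ ^ i = 0)
    (ε : ℝ) (hε : 0 < ε) (hε1 : φ - 1 - ε > 0)
    (hε2 : ∀ z : ℂ, ‖z - φ‖ ≤ ε →
      z ^ a0 - ∑ i ∈ range a0, z ^ i = 0 → z = φ) :
    ∃ N : ℕ, ∀ a1 : ℕ, N ≤ a1 → a0 < a1 →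
      ∃ z : ℂ, ‖z - φ‖ < ε ∧
        z ^ (a1 + (a1 + η)) * (z - 1) * (z ^ a0 - ∑ i ∈ range a0, z ^ i)
          + z ^ (a1 + 1) * (z ^ (η + a0 - 1) - z ^ η + z ^ (a0 - 1) - 1)
          + (-z ^ (a0 + 1) + 2 * z - 1) = 0 := by
  -- factorization of M
  have hM : ∀ x : ℝ, 0 < x →
      x ^ a0 - ∑ i ∈ range a0, x ^ i
        = x ^ a0 * (1 - ∑ j ∈ range a0, (x⁻¹) ^ (j + 1)) := by
    intro x hx
    rw [mul_sub, mul_one, Finset.mul_sum]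
    congr 1
    rw [← Finset.sum_range_reflect]
    refine Finset.sum_congr rfl fun j hj => ?_
    have hj' : j < a0 := Finset.mem_range.mp hj
    have hxne : x ≠ 0 := ne_of_gt hx
    have hpow : (a0 - 1 - j) + (j + 1) = a0 := by omega
    rw [inv_pow, eq_comm, mul_inv_eq_iff_eq_mul₀ (by positivity), ← pow_add, hpow]
  have hφ0 : (0:ℝ) < φ := by linarith
  -- F
  set F : ℝ → ℝ := fun t => ∑ j ∈ range a0, t ^ (j + 1) with hF
  have hFmono : ∀ s t : ℝ, 0 < s → s < t → F s < F t := by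
    intro s t hs hst
    refine Finset.sum_lt_sum_of_nonempty (Finset.nonempty_range_iff.mpr (by omega))
      fun j _ => ?_
    exact pow_lt_pow_left₀ hst (le_of_lt hs) (by omega)
  have hFφ : F φ⁻¹ = 1 := by
    have h1 := hM φ hφ0
    rw [hφroot] at h1
    have h2 : (1:ℝ) - F φ⁻¹ = 0 := by
      have hφa : (0:ℝ) < φ ^ a0 := by positivity
      have := h1.symm
      rcases mul_eq_zero.mp this with h | h
      · exact absurd h (ne_of_gt hφa)
      · exact h
    linarith
  -- sign of M
  have hMneg : ∀ x : ℝ, 1 < x → x < φ →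
      x ^ a0 - ∑ i ∈ range a0, x ^ i < 0 := by
    intro x h1x hxφ
    have hx0 : (0:ℝ) < x := by linarith
    rw [hM x hx0]
    have hinv : φ⁻¹ < x⁻¹ := by
      apply inv_strictAnti₀ hx0 hxφ
    have : F φ⁻¹ < F x⁻¹ := hFmono _ _ (by positivity) hinv
    rw [hFφ] at this
    have hxa : (0:ℝ) < x ^ a0 := by positivity
    nlinarith
  have hMpos : ∀ x : ℝ, φ < x →
      0 < x ^ a0 - ∑ i ∈ range a0, x ^ i := by
    intro x hφx
    have hx0 : (0:ℝ) < x := by linarith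
    rw [hM x hx0]
    have hinv : x⁻¹ < φ⁻¹ := by
      apply inv_strictAnti₀ hφ0 hφx
    have : F x⁻¹ < F φ⁻¹ := hFmono _ _ (by positivity) hinv
    rw [hFφ] at this
    have hxa : (0:ℝ) < x ^ a0 := by positivity
    nlinarith
  -- endpoints
  set xm : ℝ := φ - ε / 2 with hxm
  set xp : ℝ := φ + ε / 2 with hxp
  have h1m : 1 < xm := by simp only [hxm]; linarith
  have h1p : 1 < xp := by simp only [hxp]; linarith
  set Mm : ℝ := xm ^ a0 - ∑ i ∈ range a0, xm ^ i with hMm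
  set Mp : ℝ := xp ^ a0 - ∑ i ∈ range a0, xp ^ i with hMp
  have hcm : (xm - 1) * Mm < 0 :=
    mul_neg_of_pos_of_neg (by linarith) (hMneg xm h1m (by simp only [hxm]; linarith))
  have hcp : 0 < (xp - 1) * Mp :=
    mul_pos (by linarith) (hMpos xp (by simp only [hxp]; linarith))
  set Rm : ℝ := xm ^ (η + a0 - 1) - xm ^ η + xm ^ (a0 - 1) - 1 with hRm
  set Rp : ℝ := xp ^ (η + a0 - 1) - xp ^ η + xp ^ (a0 - 1) - 1 with hRp
  set Sm : ℝ := -xm ^ (a0 + 1) + 2 * xm - 1 with hSm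
  set Sp : ℝ := -xp ^ (a0 + 1) + 2 * xp - 1 with hSp
  obtain ⟨N1, hN1⟩ := pow_unbounded_of_one_lt ((|Rm| + |Sm| + 1) / (-((xm - 1) * Mm))) h1m
  obtain ⟨N2, hN2⟩ := pow_unbounded_of_one_lt ((|Rp| + |Sp| + 1) / ((xp - 1) * Mp)) h1p
  have hN1' : |Rm| + |Sm| + 1 < xm ^ N1 * (-((xm - 1) * Mm)) :=
    (div_lt_iff₀ (by linarith)).mp hN1
  have hN2' : |Rp| + |Sp| + 1 < xp ^ N2 * ((xp - 1) * Mp) :=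
    (div_lt_iff₀ hcp).mp hN2
  refine ⟨max N1 N2, fun a1 ha1 ha0 => ?_⟩
  -- real polynomial
  set f : ℝ → ℝ := fun x =>
    x ^ (a1 + (a1 + η)) * (x - 1) * (x ^ a0 - ∑ i ∈ range a0, x ^ i)
      + x ^ (a1 + 1) * (x ^ (η + a0 - 1) - x ^ η + x ^ (a0 - 1) - 1)
      + (-x ^ (a0 + 1) + 2 * x - 1) with hf
  have hexp : a1 + (a1 + η) = (a1 + 1) + (a1 + η - 1) := by omega
  have hNm : N1 ≤ a1 + η - 1 := by
    have := le_max_left N1 N2; omega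
  have hNp : N2 ≤ a1 + η - 1 := by
    have := le_max_right N1 N2; omega
  -- f xm < 0
  have hfm : f xm < 0 := by
    have hpowge : xm ^ N1 ≤ xm ^ (a1 + η - 1) :=
      pow_le_pow_right₀ (le_of_lt h1m) hNm
    have hkey : xm ^ (a1 + η - 1) * ((xm - 1) * Mm) ≤ -(|Rm| + |Sm| + 1) := by
      have h2 : xm ^ N1 * (-((xm - 1) * Mm)) ≤ xm ^ (a1 + η - 1) * (-((xm - 1) * Mm)) :=
        mul_le_mul_of_nonneg_right hpowge (by linarith)
      nlinarith [hN1', h2]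
    have hone : (1:ℝ) ≤ xm ^ (a1 + 1) := one_le_pow₀ (le_of_lt h1m)
    have hinner : xm ^ (a1 + η - 1) * ((xm - 1) * Mm) + Rm ≤ -(|Sm| + 1) := by
      have := le_abs_self Rm
      linarith
    have hfm' : f xm = xm ^ (a1 + 1) * (xm ^ (a1 + η - 1) * ((xm - 1) * Mm) + Rm) + Sm := by
      simp only [hf, hexp, pow_add]
      ring
    rw [hfm']
    have hmul : xm ^ (a1 + 1) * (xm ^ (a1 + η - 1) * ((xm - 1) * Mm) + Rm)
        ≤ 1 * (xm ^ (a1 + η - 1) * ((xm - 1) * Mm) + Rm) :=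
      mul_le_mul_of_nonpos_right hone (by have := abs_nonneg Sm; linarith)
    have := le_abs_self Sm
    have := neg_abs_le Sm
    linarith
  -- f xp > 0
  have hfp : 0 < f xp := by
    have hpowge : xp ^ N2 ≤ xp ^ (a1 + η - 1) :=
      pow_le_pow_right₀ (le_of_lt h1p) hNp
    have hkey : |Rp| + |Sp| + 1 ≤ xp ^ (a1 + η - 1) * ((xp - 1) * Mp) := by
      have h2 : xp ^ N2 * ((xp - 1) * Mp) ≤ xp ^ (a1 + η - 1) * ((xp - 1) * Mp) :=
        mul_le_mul_of_nonneg_right hpowge (le_of_lt hcp)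
      linarith
    have hone : (1:ℝ) ≤ xp ^ (a1 + 1) := one_le_pow₀ (le_of_lt h1p)
    have hinner : |Sp| + 1 ≤ xp ^ (a1 + η - 1) * ((xp - 1) * Mp) + Rp := by
      have := neg_abs_le Rp
      linarith
    have hfp' : f xp = xp ^ (a1 + 1) * (xp ^ (a1 + η - 1) * ((xp - 1) * Mp) + Rp) + Sp := by
      simp only [hf, hexp, pow_add]
      ring
    rw [hfp']
    have hmul : 1 * (xp ^ (a1 + η - 1) * ((xp - 1) * Mp) + Rp)
        ≤ xp ^ (a1 + 1) * (xp ^ (a1 + η - 1) * ((xp - 1) * Mp) + Rp) :=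
      mul_le_mul_of_nonneg_right hone (by have := abs_nonneg Sp; linarith)
    have := le_abs_self Sp
    have := neg_abs_le Sp
    linarith
  -- IVT
  have hcont : ContinuousOn f (Set.Icc xm xp) := by
    apply Continuous.continuousOn
    simp only [hf]
    fun_prop
  have hxmle : xm ≤ xp := by simp only [hxm, hxp]; linarith
  have hmem : (0:ℝ) ∈ Set.Icc (f xm) (f xp) := ⟨le_of_lt hfm, le_of_lt hfp⟩
  obtain ⟨x, hxIcc, hx0⟩ := intermediate_value_Icc hxmle hcont hmem
  refine ⟨(x : ℂ), ?_, ?_⟩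
  · have h1 : |x - φ| ≤ ε / 2 := by
      rw [abs_le]
      constructor
      · have := hxIcc.1; simp only [hxm] at this; linarith
      · have := hxIcc.2; simp only [hxp] at this; linarith
    calc ‖(x:ℂ) - φ‖ = |x - φ| := by
          rw [← Complex.ofReal_sub, Complex.norm_real, Real.norm_eq_abs]
      _ < ε := by linarith
  · have : ((f x : ℝ) : ℂ) = 0 := by rw [hx0]; norm_num
    simp only [hf] at this
    push_cast at this
    convert this using 2 <;> push_cast <;> ring
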